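/- arXiv:0803.1541 — 6 statements merged into one kernel-verified Lean document; each statement's English description precedes it below -/
import Mathlib

section
/- Let (Y, d_Y) be a compact geodesic metric space with at least two points, M > 0, d_ℓ the induced length metric on X_M = Y × (0, M], and ω ∈ X_M a basepoint. Then there exists a constant C > 0 such that for all distinct a, b ∈ Y and all sequences x_i = (p_i, s_i), y_i = (q_i, t_i) in X_M with s_i → 0, t_i → 0, p_i → a and q_i → b, one has |liminf_{i→∞} (x_i, y_i)_ω + log d_Y(a,b)| ≤ C. -/
open Set

/-- The Balogh–Schramm distance on `Y × (0, ∞)`: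
`ρ((p,s),(q,t)) = 2·log((d_Y(p,q) + max(s,t))/√(s·t))`. -/
noncomputable def BS {Y : Type*} [MetricSpace Y] (x y : Y × ℝ) : ℝ :=
  2 * Real.log ((dist x.1 y.1 + max x.2 y.2) / Real.sqrt (x.2 * y.2))

/-- Length of the map `γ` over the set `S` with respect to the distance
function `d`: the supremum over finite monotone partitions in `S` of the sums
of consecutive distances (as in Mathlib's `eVariationOn`). -/
noncomputable def lengthOn {X : Type*} (d : X → X → ℝ) (γ : ℝ → X) (S : Set ℝ) : ENNReal :=
  ⨆ p : ℕ × { u : ℕ → ℝ // Monotone u ∧ ∀ i, u i ∈ S },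
    ∑ i ∈ Finset.range p.1, ENNReal.ofReal (d (γ (p.2.1 i)) (γ (p.2.1 (i + 1))))

/-- Membership in `X_M = Y × (0, M]`. -/
def inXM {Y : Type*} (M : ℝ) (x : Y × ℝ) : Prop := 0 < x.2 ∧ x.2 ≤ M

/-- The induced length metric on `X_M = Y × (0, M]`: the infimum of
Balogh–Schramm lengths of continuous paths joining `x` and `y` inside `X_M`. -/
noncomputable def dLen {Y : Type*} [MetricSpace Y] (M : ℝ) (x y : Y × ℝ) : ℝ :=
  (sInf {L : ENNReal | ∃ (a b : ℝ) (γ : ℝ → Y × ℝ), a ≤ b ∧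
      ContinuousOn γ (Icc a b) ∧ γ a = x ∧ γ b = y ∧
      (∀ t ∈ Icc a b, inXM M (γ t)) ∧
      lengthOn (BS (Y := Y)) γ (Icc a b) = L}).toReal

/-- A metric space is geodesic: any two points are joined by an isometric
embedding of `[0, dist p q]`. -/
def GeodesicSpace (Y : Type*) [MetricSpace Y] : Prop :=
  ∀ p q : Y, ∃ α : ℝ → Y, α 0 = p ∧ α (dist p q) = q ∧
    ∀ s ∈ Icc (0:ℝ) (dist p q), ∀ t ∈ Icc (0:ℝ) (dist p q), dist (α s) (α t) = |s - t|

/-- The Gromov product `(x,y)_ω` with respect to the length metric `dLen M`. -/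
noncomputable def gromovProd {Y : Type*} [MetricSpace Y] (M : ℝ) (ω x y : Y × ℝ) : ℝ :=
  (dLen M x ω + dLen M y ω - dLen M x y) / 2



-- Auxiliary definitions and lemmas

def pathSet {Y : Type*} [MetricSpace Y] (M : ℝ) (x y : Y × ℝ) : Set ENNReal :=
  {L : ENNReal | ∃ (a b : ℝ) (γ : ℝ → Y × ℝ), a ≤ b ∧
      ContinuousOn γ (Icc a b) ∧ γ a = x ∧ γ b = y ∧
      (∀ t ∈ Icc a b, inXM M (γ t)) ∧
      lengthOn (BS (Y := Y)) γ (Icc a b) = L}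

lemma dLen_def {Y : Type*} [MetricSpace Y] (M : ℝ) (x y : Y × ℝ) :
    dLen M x y = (sInf (pathSet M x y)).toReal := rfl

lemma BS_eq {Y : Type*} [MetricSpace Y] (x y : Y × ℝ) (hx : 0 < x.2) (hy : 0 < y.2) :
    BS x y = 2 * Real.log (dist x.1 y.1 + max x.2 y.2) - Real.log x.2 - Real.log y.2 := by
  have hnum : 0 < dist x.1 y.1 + max x.2 y.2 := by
    have := dist_nonneg (x := x.1) (y := y.1)
    have : 0 < max x.2 y.2 := lt_max_of_lt_left hx
    linarith [dist_nonneg (x := x.1) (y := y.1)]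
  have hst : 0 < x.2 * y.2 := mul_pos hx hy
  rw [BS, Real.log_div hnum.ne' (Real.sqrt_ne_zero'.2 hst), Real.log_sqrt hst.le,
    Real.log_mul hx.ne' hy.ne']
  ring

lemma BS_nonneg {Y : Type*} [MetricSpace Y] (x y : Y × ℝ) (hx : 0 < x.2) (hy : 0 < y.2) :
    0 ≤ BS x y := by
  have hmax : 0 < max x.2 y.2 := lt_max_of_lt_left hx
  have hsq : Real.sqrt (x.2 * y.2) ≤ max x.2 y.2 := by
    have h1 : x.2 * y.2 ≤ max x.2 y.2 * max x.2 y.2 :=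
      mul_le_mul (le_max_left _ _) (le_max_right _ _) hy.le hmax.le
    calc Real.sqrt (x.2 * y.2) ≤ Real.sqrt (max x.2 y.2 * max x.2 y.2) := Real.sqrt_le_sqrt h1
      _ = max x.2 y.2 := Real.sqrt_mul_self hmax.le
  have hs : 0 < Real.sqrt (x.2 * y.2) := Real.sqrt_pos.2 (mul_pos hx hy)
  have : 1 ≤ (dist x.1 y.1 + max x.2 y.2) / Real.sqrt (x.2 * y.2) := by
    rw [le_div_iff₀ hs]
    have := dist_nonneg (x := x.1) (y := y.1)
    linarith
  have h2 := Real.log_nonneg this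
  simp only [BS]
  linarith

lemma le_lengthOn {X : Type*} (dd : X → X → ℝ) (γ : ℝ → X) (a b : ℝ) (hab : a ≤ b) :
    ENNReal.ofReal (dd (γ a) (γ b)) ≤ lengthOn dd γ (Icc a b) := by
  set u : ℕ → ℝ := fun i => if i = 0 then a else b with hu
  have hmono : Monotone u := by
    intro i j hij
    simp only [hu]
    split_ifs with h1 h2
    · exact le_rfl
    · exact hab
    · omega
    · exact le_rfl
  have hmem : ∀ i, u i ∈ Icc a b := by
    intro i; simp only [hu]; split_ifs
    · exact ⟨le_rfl, hab⟩
    · exact ⟨hab, le_rfl⟩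
  have := le_iSup (fun p : ℕ × { u : ℕ → ℝ // Monotone u ∧ ∀ i, u i ∈ Icc a b } =>
    ∑ i ∈ Finset.range p.1, ENNReal.ofReal (dd (γ (p.2.1 i)) (γ (p.2.1 (i + 1)))))
    (⟨1, ⟨u, hmono, hmem⟩⟩)
  simpa [hu, lengthOn] using this

lemma lengthOn_le_of_modulus {X : Type*} (dd : X → X → ℝ) (γ : ℝ → X) (a b : ℝ)
    (hab : a ≤ b) (f : ℝ → ℝ) (hf : Monotone f)
    (hbd : ∀ u ∈ Icc a b, ∀ v ∈ Icc a b, u ≤ v → dd (γ u) (γ v) ≤ f v - f u) :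
    lengthOn dd γ (Icc a b) ≤ ENNReal.ofReal (f b - f a) := by
  refine iSup_le ?_
  rintro ⟨n, u, hu, hmem⟩
  calc ∑ i ∈ Finset.range n, ENNReal.ofReal (dd (γ (u i)) (γ (u (i+1))))
      ≤ ∑ i ∈ Finset.range n, ENNReal.ofReal (f (u (i+1)) - f (u i)) := by
        refine Finset.sum_le_sum fun i _ => ENNReal.ofReal_le_ofReal ?_
        exact hbd _ (hmem i) _ (hmem (i+1)) (hu (Nat.le_succ i))
    _ = ENNReal.ofReal (∑ i ∈ Finset.range n, (f (u (i+1)) - f (u i))) := by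
        rw [ENNReal.ofReal_sum_of_nonneg]
        exact fun i _ => sub_nonneg.2 (hf (hu (Nat.le_succ i)))
    _ = ENNReal.ofReal (f (u n) - f (u 0)) := by rw [Finset.sum_range_sub (fun i => f (u i))]
    _ ≤ _ := by
        refine ENNReal.ofReal_le_ofReal ?_
        have h1 := hf (hmem 0).1
        have h2 := hf (hmem n).2
        linarith


set_option maxHeartbeats 1000000 in
lemma path_exists {Y : Type*} [MetricSpace Y] (hgeo : GeodesicSpace Y) {M D : ℝ} (hM : 0 < M)
    (x y : Y × ℝ) (hx : inXM M x) (hy : inXM M y) (hD : dist x.1 y.1 ≤ D) :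
    ∃ L ∈ pathSet M x y, L ≤ ENNReal.ofReal (BS x y + (2 + 2 * D / M)) := by
  obtain ⟨p, s⟩ := x
  obtain ⟨q, t⟩ := y
  obtain ⟨hs, hsM⟩ := hx
  obtain ⟨ht, htM⟩ := hy
  simp only at hs ht hsM htM hD
  obtain ⟨α, hα0, hαd, hαiso⟩ := hgeo p q
  set d : ℝ := dist p q with hd
  have hd0 : 0 ≤ d := dist_nonneg
  have hD0 : 0 ≤ D := le_trans hd0 hD
  have hmaxst : 0 < max s t := lt_max_of_lt_left hs
  set h : ℝ := min M (d + max s t) with hh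
  have hhpos : 0 < h := lt_min hM (by positivity)
  have hhM : h ≤ M := min_le_left _ _
  have hhle : h ≤ d + max s t := min_le_right _ _
  have hmaxh : max s t ≤ h := le_min (max_le hsM htM) (le_add_of_nonneg_left hd0)
  have hsh : s ≤ h := le_trans (le_max_left _ _) hmaxh
  have hth : t ≤ h := le_trans (le_max_right _ _) hmaxh
  set A : ℝ := Real.log h - Real.log s with hA
  set B : ℝ := Real.log h - Real.log t with hB
  have hA0 : 0 ≤ A := sub_nonneg.2 (Real.log_le_log hs hsh)
  have hB0 : 0 ≤ B := sub_nonneg.2 (Real.log_le_log ht hth)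
  have hsA : s * Real.exp A = h := by
    rw [hA, Real.exp_sub, Real.exp_log hhpos, Real.exp_log hs]
    field_simp
  have htB : t * Real.exp B = h := by
    rw [hB, Real.exp_sub, Real.exp_log hhpos, Real.exp_log ht]
    field_simp
  set T : ℝ := A + d + B with hT
  have hT0 : (0:ℝ) ≤ T := by rw [hT]; linarith
  clear_value d h A B T
  -- the clamp function
  set c : ℝ → ℝ := fun u => min (max (u - A) 0) d with hc
  have hc0 : c 0 = 0 := by
    simp only [hc]
    rw [max_eq_right (by linarith), min_eq_left hd0]
  have hcT : c T = d := by
    simp only [hc]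
    rw [max_eq_left (by rw [hT]; linarith), min_eq_right (by rw [hT]; linarith)]
  have hcmono : Monotone c := fun u v huv =>
    min_le_min (max_le_max (by linarith) le_rfl) le_rfl
  have hcrange : ∀ u, c u ∈ Icc 0 d := fun u =>
    ⟨le_min (le_max_right _ _) hd0, min_le_right _ _⟩
  have hclip : ∀ u v : ℝ, |c u - c v| ≤ |u - v| := by
    intro u v
    simp only [hc]
    have h1 : |max (u - A) 0 - max (v - A) 0| ≤ |(u - A) - (v - A)| :=
      abs_max_sub_max_le_abs _ _ _
    have h2 : |min (max (u - A) 0) d - min (max (v - A) 0) d| ≤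
        |max (u - A) 0 - max (v - A) 0| := by
      have := abs_min_sub_min_le_max (max (u - A) 0) d (max (v - A) 0) d
      simpa using this
    calc |min (max (u - A) 0) d - min (max (v - A) 0) d| ≤ _ := h2
      _ ≤ |(u - A) - (v - A)| := h1
      _ = |u - v| := by ring_nf
  -- base and height
  set base : ℝ → Y := fun u => α (c u) with hbase
  have hbdist : ∀ u v, dist (base u) (base v) = |c u - c v| := fun u v =>
    hαiso _ (hcrange u) _ (hcrange v)
  have hbasecont : Continuous base := by
    refine (LipschitzWith.of_dist_le_mul (K := 1) ?_).continuous
    intro u v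
    rw [hbdist, Real.dist_eq]
    simpa using hclip u v
  set height : ℝ → ℝ := fun u => min h (min (s * Real.exp u) (t * Real.exp (T - u))) with hheight
  have hhtpos : ∀ u, 0 < height u := fun u =>
    lt_min hhpos (lt_min (by positivity) (by positivity))
  have hhtle : ∀ u, height u ≤ h := fun u => min_le_left _ _
  have hheightcont : Continuous height := by
    simp only [hheight]
    fun_prop
  have hkey1 : ∀ u, u ≤ A + d → h ≤ t * Real.exp (T - u) := by
    intro u hu
    have e : t * Real.exp (T - u) = h * Real.exp (A + d - u) := by
      rw [← htB, show T - u = B + (A + d - u) by rw [hT]; ring, Real.exp_add]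
      ring
    rw [e]
    nlinarith [Real.one_le_exp (by linarith : (0:ℝ) ≤ A + d - u), hhpos]
  have hkey2 : ∀ u, A ≤ u → h ≤ s * Real.exp u := by
    intro u hu
    have e : s * Real.exp u = h * Real.exp (u - A) := by
      rw [← hsA, show Real.exp u = Real.exp A * Real.exp (u - A) by
        rw [← Real.exp_add]; ring_nf]
      ring
    rw [e]
    nlinarith [Real.one_le_exp (by linarith : (0:ℝ) ≤ u - A), hhpos]
  have hkey3 : ∀ u, u ≤ A → s * Real.exp u ≤ h := by
    intro u hu
    rw [← hsA]
    have := Real.exp_le_exp.2 hu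
    nlinarith [hs]
  have hkey4 : ∀ u, A + d ≤ u → t * Real.exp (T - u) ≤ h := by
    intro u hu
    rw [← htB]
    have : Real.exp (T - u) ≤ Real.exp B := Real.exp_le_exp.2 (by rw [hT]; linarith)
    nlinarith [ht]
  have hmin1 : ∀ a b : ℝ, h ≤ b → min h (min a b) = min h a := by
    intro a b hb
    rw [min_comm a b, ← min_assoc, min_eq_left hb]
  have hmin2 : ∀ a b : ℝ, h ≤ a → min h (min a b) = min h b := by
    intro a b ha
    rw [← min_assoc, min_eq_left ha]
  have hgt1 : ∀ u, u ≤ A + d → height u = min h (s * Real.exp u) := by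
    intro u hu
    simp only [hheight]
    exact hmin1 _ _ (hkey1 u hu)
  have hgt2 : ∀ u, A ≤ u → height u = min h (t * Real.exp (T - u)) := by
    intro u hu
    simp only [hheight]
    exact hmin2 _ _ (hkey2 u hu)
  have hheight0 : height 0 = s := by
    rw [hgt1 0 (by linarith), Real.exp_zero, mul_one, min_eq_right hsh]
  have hheightT : height T = t := by
    rw [hgt2 T (by rw [hT]; linarith), sub_self, Real.exp_zero, mul_one, min_eq_right hth]
  -- the path
  set γ : ℝ → Y × ℝ := fun u => (base u, height u) with hγ
  have hγcont : Continuous γ := hbasecont.prodMk hheightcont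
  have hbase0 : base 0 = p := by simp only [hbase]; rw [hc0]; exact hα0
  have hbaseT : base T = q := by simp only [hbase]; rw [hcT]; exact hαd
  have hγ0 : γ 0 = (p, s) := by simp [hγ, hbase0, hheight0]
  have hγT : γ T = (q, t) := by simp [hγ, hbaseT, hheightT]
  have hinX : ∀ u ∈ Icc (0:ℝ) T, inXM M (γ u) := by
    intro u _
    exact ⟨hhtpos u, le_trans (hhtle u) hhM⟩
  -- the modulus
  set f : ℝ → ℝ := fun u => min u A + (2 / h) * c u + max (u - (A + d)) 0 with hf
  have hfmono : Monotone f := by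
    intro u v huv
    simp only [hf]
    have h1 : min u A ≤ min v A := min_le_min huv le_rfl
    have h2 : c u ≤ c v := hcmono huv
    have h3 : max (u - (A + d)) 0 ≤ max (v - (A + d)) 0 := max_le_max (by linarith) le_rfl
    have h4 : (2 / h) * c u ≤ (2 / h) * c v :=
      mul_le_mul_of_nonneg_left h2 (by positivity)
    linarith
  have hf0 : f 0 = 0 := by
    simp only [hf]
    rw [hc0, min_eq_left hA0, max_eq_right (by linarith)]
    ring
  have hfT : f T = A + (2 / h) * d + B := by
    simp only [hf]
    rw [hcT, min_eq_right (by rw [hT]; linarith),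
      show T - (A + d) = B by rw [hT]; ring, max_eq_left hB0]
  have hmod : ∀ u ∈ Icc (0:ℝ) T, ∀ v ∈ Icc (0:ℝ) T, u ≤ v → BS (γ u) (γ v) ≤ f v - f u := by
    intro u hu v hv huv
    have hσpos : 0 < height u := hhtpos u
    have hτpos : 0 < height v := hhtpos v
    have hBSe : BS (γ u) (γ v) = 2 * Real.log (dist (base u) (base v)
        + max (height u) (height v)) - Real.log (height u) - Real.log (height v) := by
      have := BS_eq (γ u) (γ v) (by simpa [hγ] using hσpos) (by simpa [hγ] using hτpos)
      simpa [hγ] using this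
    rcases le_or_gt v A with hcase1 | hcase1'
    · -- both on the ascending vertical segment
      have huA : u ≤ A := le_trans huv hcase1
      have hσ : height u = s * Real.exp u := by
        rw [hgt1 u (by linarith), min_eq_right (hkey3 u huA)]
      have hτ : height v = s * Real.exp v := by
        rw [hgt1 v (by linarith), min_eq_right (hkey3 v hcase1)]
      have hcu : c u = 0 := by
        simp only [hc]; rw [max_eq_right (by linarith), min_eq_left hd0]
      have hcv : c v = 0 := by
        simp only [hc]; rw [max_eq_right (by linarith), min_eq_left hd0]
      have hdistb : dist (base u) (base v) = 0 := by
        rw [hbdist, hcu, hcv, sub_self, abs_zero]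
      have hστ : height u ≤ height v := by
        rw [hσ, hτ]
        have := Real.exp_le_exp.2 huv
        nlinarith [hs]
      have hfu : f u = u := by
        simp only [hf, hcu]
        rw [min_eq_left huA, max_eq_right (by linarith)]
        ring
      have hfv : f v = v := by
        simp only [hf, hcv]
        rw [min_eq_left hcase1, max_eq_right (by linarith)]
        ring
      rw [hBSe, hdistb, zero_add, max_eq_right hστ, hσ, hτ, hfu, hfv,
        Real.log_mul hs.ne' (Real.exp_ne_zero u), Real.log_mul hs.ne' (Real.exp_ne_zero v),
        Real.log_exp, Real.log_exp]
      linarith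
    rcases le_or_gt (A + d) u with hcase2 | hcase2'
    · -- both on the descending vertical segment
      have hvAd : A + d ≤ v := le_trans hcase2 huv
      have hσ : height u = t * Real.exp (T - u) := by
        rw [hgt2 u (by linarith), min_eq_right (hkey4 u hcase2)]
      have hτ : height v = t * Real.exp (T - v) := by
        rw [hgt2 v (by linarith), min_eq_right (hkey4 v hvAd)]
      have hcu : c u = d := by
        simp only [hc]; rw [max_eq_left (by linarith), min_eq_right (by linarith)]
      have hcv : c v = d := by
        simp only [hc]; rw [max_eq_left (by linarith), min_eq_right (by linarith)]
      have hdistb : dist (base u) (base v) = 0 := by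
        rw [hbdist, hcu, hcv, sub_self, abs_zero]
      have hστ : height v ≤ height u := by
        rw [hσ, hτ]
        have := Real.exp_le_exp.2 (by linarith : T - v ≤ T - u)
        nlinarith [ht]
      have hfu : f u = A + (2 / h) * d + (u - (A + d)) := by
        simp only [hf, hcu]
        rw [min_eq_right (by linarith), max_eq_left (by linarith)]
      have hfv : f v = A + (2 / h) * d + (v - (A + d)) := by
        simp only [hf, hcv]
        rw [min_eq_right (by linarith), max_eq_left (by linarith)]
      rw [hBSe, hdistb, zero_add, max_eq_left hστ, hσ, hτ, hfu, hfv,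
        Real.log_mul ht.ne' (Real.exp_ne_zero _), Real.log_mul ht.ne' (Real.exp_ne_zero _),
        Real.log_exp, Real.log_exp]
      linarith
    · -- the general case
      have hσ : height u = min h (s * Real.exp u) := hgt1 u hcase2'.le
      have hτ : height v = min h (t * Real.exp (T - v)) := hgt2 v hcase1'.le
      set w : ℝ := c v - c u with hw
      have hw0 : 0 ≤ w := sub_nonneg.2 (hcmono huv)
      have hdistb : dist (base u) (base v) = w := by
        rw [hbdist, abs_sub_comm, abs_of_nonneg hw0]
      have hmaxle : max (height u) (height v) ≤ h := max_le (hhtle u) (hhtle v)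
      have hmaxpos : 0 < max (height u) (height v) := lt_max_of_lt_left hσpos
      have hlog1 : Real.log (w + max (height u) (height v)) ≤ Real.log h + w / h := by
        have e1 : Real.log (w + max (height u) (height v)) ≤
            Real.log (h * (1 + w / h)) := by
          apply Real.log_le_log (by linarith)
          have e : h * (1 + w / h) = h + w := by field_simp
          linarith [e]
        rw [Real.log_mul hhpos.ne' (by positivity : (1:ℝ) + w / h ≠ 0)] at e1
        have e2 : Real.log (1 + w / h) ≤ w / h := by
          have := Real.log_le_sub_one_of_pos (show (0:ℝ) < 1 + w / h by positivity)
          linarith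
        linarith
      have hlogσ : Real.log h - Real.log (height u) = max (A - u) 0 := by
        rw [hσ]
        rcases le_total h (s * Real.exp u) with hle | hle
        · rw [min_eq_left hle, sub_self]
          have hle' : s * Real.exp A ≤ s * Real.exp u := by rw [hsA]; exact hle
          have hAu : A ≤ u := Real.exp_le_exp.1 (le_of_mul_le_mul_left hle' hs)
          rw [max_eq_right (by linarith)]
        · rw [min_eq_right hle, Real.log_mul hs.ne' (Real.exp_ne_zero _), Real.log_exp]
          have hle' : s * Real.exp u ≤ s * Real.exp A := by rw [hsA]; exact hle
          have hAu : u ≤ A := Real.exp_le_exp.1 (le_of_mul_le_mul_left hle' hs)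
          rw [max_eq_left (by linarith), hA]
          ring
      have hlogτ : Real.log h - Real.log (height v) = max (v - (A + d)) 0 := by
        rw [hτ]
        rcases le_total h (t * Real.exp (T - v)) with hle | hle
        · rw [min_eq_left hle, sub_self]
          have hle' : t * Real.exp B ≤ t * Real.exp (T - v) := by rw [htB]; exact hle
          have hBv : B ≤ T - v := Real.exp_le_exp.1 (le_of_mul_le_mul_left hle' ht)
          rw [max_eq_right (by rw [hT] at hBv; linarith)]
        · rw [min_eq_right hle, Real.log_mul ht.ne' (Real.exp_ne_zero _), Real.log_exp]
          have hle' : t * Real.exp (T - v) ≤ t * Real.exp B := by rw [htB]; exact hle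
          have hBv : T - v ≤ B := Real.exp_le_exp.1 (le_of_mul_le_mul_left hle' ht)
          rw [max_eq_left (by rw [hT] at hBv; linarith), hT]
          linarith [hB]
      have hminvA : min v A = A := min_eq_right hcase1'.le
      have hminuA : A - min u A = max (A - u) 0 := by
        rcases le_total u A with h' | h'
        · rw [min_eq_left h', max_eq_left (by linarith)]
        · rw [min_eq_right h', max_eq_right (by linarith), sub_self]
      have hmaxu : max (u - (A + d)) 0 = 0 := max_eq_right (by linarith)
      have hX : 2 * (w / h) = 2 / h * c v - 2 / h * c u := by rw [hw]; ring
      have hfeq : f v - f u = max (A - u) 0 + 2 * (w / h) + max (v - (A + d)) 0 := by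
        simp only [hf, hminvA, hmaxu]
        linarith [hminuA, hX]
      rw [hBSe, hdistb, hfeq]
      linarith [hlog1, hlogσ, hlogτ]
  -- conclusion
  refine ⟨lengthOn (BS (Y := Y)) γ (Icc 0 T), ⟨0, T, γ, hT0, hγcont.continuousOn,
    hγ0, hγT, hinX, rfl⟩, ?_⟩
  calc lengthOn (BS (Y := Y)) γ (Icc 0 T) ≤ ENNReal.ofReal (f T - f 0) :=
        lengthOn_le_of_modulus _ _ _ _ hT0 f hfmono hmod
    _ ≤ _ := by
        refine ENNReal.ofReal_le_ofReal ?_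
        rw [hfT, hf0, sub_zero]
        have hBSxy : BS (p, s) (q, t) = 2 * Real.log (d + max s t)
            - Real.log s - Real.log t := by
          have := BS_eq (p, s) (q, t) hs ht
          simpa [hd] using this
        have hlhle : Real.log h ≤ Real.log (d + max s t) := Real.log_le_log hhpos hhle
        have hAB : A + B ≤ 2 * Real.log (d + max s t) - Real.log s - Real.log t := by
          rw [hA, hB]; linarith
        have h2dh : 2 / h * d ≤ 2 + 2 * D / M := by
          rcases min_cases M (d + max s t) with ⟨he, hle⟩ | ⟨he, hle⟩
          · have hhM' : h = M := by rw [hh, he]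
            have hd1 : 2 / M * d ≤ 2 / M * D := mul_le_mul_of_nonneg_left hD (by positivity)
            have hd2 : 2 / M * D = 2 * D / M := by ring
            have hd3 : (0:ℝ) ≤ 2 := by norm_num
            rw [hhM']
            linarith
          · have hhM' : h = d + max s t := by rw [hh, he]
            have hd1 : 2 / (d + max s t) * d ≤ 2 := by
              rw [div_mul_eq_mul_div, div_le_iff₀ (by positivity)]
              nlinarith [hmaxst]
            have hd2 : (0:ℝ) ≤ 2 * D / M := by positivity
            rw [hhM']
            linarith
        rw [hBSxy]
        linarith


lemma dLen_bounds {Y : Type*} [MetricSpace Y] [CompactSpace Y] (hgeo : GeodesicSpace Y)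
    {M : ℝ} (hM : 0 < M) (x y : Y × ℝ) (hx : inXM M x) (hy : inXM M y) :
    BS x y ≤ dLen M x y ∧
      dLen M x y ≤ BS x y + (2 + 2 * Metric.diam (univ : Set Y) / M) := by
  have hD : dist x.1 y.1 ≤ Metric.diam (univ : Set Y) :=
    Metric.dist_le_diam_of_mem isCompact_univ.isBounded (mem_univ _) (mem_univ _)
  obtain ⟨L, hL, hLle⟩ := path_exists hgeo hM x y hx hy hD
  have hdiam0 : 0 ≤ Metric.diam (univ : Set Y) := Metric.diam_nonneg
  have hK0 : (0:ℝ) ≤ 2 + 2 * Metric.diam (univ : Set Y) / M := by positivity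
  have hBS0 : 0 ≤ BS x y := BS_nonneg x y hx.1 hy.1
  have hsinf_le : sInf (pathSet M x y) ≤
      ENNReal.ofReal (BS x y + (2 + 2 * Metric.diam (univ : Set Y) / M)) :=
    le_trans (sInf_le hL) hLle
  have hfin : sInf (pathSet M x y) ≠ ⊤ :=
    ne_top_of_le_ne_top ENNReal.ofReal_ne_top hsinf_le
  constructor
  · have hlow : ENNReal.ofReal (BS x y) ≤ sInf (pathSet M x y) := by
      refine le_sInf ?_
      rintro L' ⟨a, b, γ, hab, hcont, hγa, hγb, hX, hlen⟩
      rw [← hlen]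
      have := le_lengthOn (BS (Y := Y)) γ a b hab
      rwa [hγa, hγb] at this
    have := ENNReal.toReal_mono hfin hlow
    rw [dLen_def]
    rwa [ENNReal.toReal_ofReal hBS0] at this
  · rw [dLen_def]
    have := ENNReal.toReal_mono ENNReal.ofReal_ne_top hsinf_le
    rwa [ENNReal.toReal_ofReal (by linarith)] at this


/-- there is a constant `C > 0` such that for all distinct boundary
points `a ≠ b` and all sequences converging to them, the liminf of the Gromov
products differs from `−log d_Y(a,b)` by at most `C`. -/
theorem stmt8 {Y : Type*} [MetricSpace Y] [CompactSpace Y] [Nontrivial Y]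
    (hgeo : GeodesicSpace Y) {M : ℝ} (hM : 0 < M) (ω : Y × ℝ) (hω : inXM M ω) :
    ∃ C : ℝ, 0 < C ∧ ∀ a b : Y, a ≠ b →
      ∀ (p q : ℕ → Y) (s t : ℕ → ℝ),
        (∀ i, inXM M (p i, s i)) → (∀ i, inXM M (q i, t i)) →
        Filter.Tendsto s Filter.atTop (nhds 0) →
        Filter.Tendsto t Filter.atTop (nhds 0) →
        Filter.Tendsto p Filter.atTop (nhds a) →
        Filter.Tendsto q Filter.atTop (nhds b) →
        |Filter.liminf (fun i => gromovProd M ω (p i, s i) (q i, t i)) Filter.atTop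
            + Real.log (dist a b)| ≤ C := by
  have hm : 0 < ω.2 := hω.1
  set D : ℝ := Metric.diam (univ : Set Y) with hD
  have hD0 : 0 ≤ D := Metric.diam_nonneg
  set K : ℝ := 2 + 2 * D / M with hK
  have hK0 : (0:ℝ) < K := by rw [hK]; positivity
  clear_value D K
  refine ⟨3 * K + 3 * |Real.log ω.2| + 2 * |Real.log (D + ω.2)| + 1, by
    have := abs_nonneg (Real.log ω.2)
    have := abs_nonneg (Real.log (D + ω.2))
    linarith, ?_⟩
  intro a b hab p q s t hps hqt hs0 ht0 hpa hqb
  have hdab : 0 < dist a b := dist_pos.2 hab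
  set g : ℕ → ℝ := fun i => gromovProd M ω (p i, s i) (q i, t i) with hg
  set P : ℕ → ℝ := fun i => Real.log (dist (p i) ω.1 + max (s i) ω.2)
      + Real.log (dist (q i) ω.1 + max (t i) ω.2) - Real.log ω.2
      - Real.log (dist (p i) (q i) + max (s i) (t i)) with hP
  have hgeq : ∀ i, g i = (dLen M (p i, s i) ω + dLen M (q i, t i) ω
      - dLen M (p i, s i) (q i, t i)) / 2 := fun _ => rfl
  clear_value g P
  have hPg : ∀ i, P i - K ≤ g i ∧ g i ≤ P i + K := by
    intro i
    obtain ⟨h1l, h1u⟩ := dLen_bounds hgeo hM (p i, s i) ω (hps i) hω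
    obtain ⟨h2l, h2u⟩ := dLen_bounds hgeo hM (q i, t i) ω (hqt i) hω
    obtain ⟨h3l, h3u⟩ := dLen_bounds hgeo hM (p i, s i) (q i, t i) (hps i) (hqt i)
    rw [← hD, ← hK] at h1u h2u h3u
    have hsi := (hps i).1
    have hti := (hqt i).1
    have e1 := BS_eq (p i, s i) ω hsi hm
    have e2 := BS_eq (q i, t i) ω hti hm
    have e3 := BS_eq (p i, s i) (q i, t i) hsi hti
    simp only at e1 e2 e3
    have hPe : P i = (BS (p i, s i) ω + BS (q i, t i) ω
        - BS (p i, s i) (q i, t i)) / 2 := by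
      rw [hP]
      simp only
      rw [e1, e2, e3]
      ring
    have hge := hgeq i
    constructor
    · rw [hge, hPe]; linarith
    · rw [hge, hPe]; linarith
  -- limits
  have hposa : (0:ℝ) < dist a ω.1 + ω.2 := add_pos_of_nonneg_of_pos dist_nonneg hm
  have hposb : (0:ℝ) < dist b ω.1 + ω.2 := add_pos_of_nonneg_of_pos dist_nonneg hm
  have l1 : Filter.Tendsto (fun i => dist (p i) ω.1 + max (s i) ω.2) Filter.atTop
      (nhds (dist a ω.1 + ω.2)) := by
    have t1 := hpa.dist (tendsto_const_nhds (x := ω.1) (f := Filter.atTop))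
    have t2 := hs0.max (tendsto_const_nhds (x := ω.2) (f := Filter.atTop))
    rw [max_eq_right hm.le] at t2
    exact t1.add t2
  have l2 : Filter.Tendsto (fun i => dist (q i) ω.1 + max (t i) ω.2) Filter.atTop
      (nhds (dist b ω.1 + ω.2)) := by
    have t1 := hqb.dist (tendsto_const_nhds (x := ω.1) (f := Filter.atTop))
    have t2 := ht0.max (tendsto_const_nhds (x := ω.2) (f := Filter.atTop))
    rw [max_eq_right hm.le] at t2
    exact t1.add t2
  have l3 : Filter.Tendsto (fun i => dist (p i) (q i) + max (s i) (t i)) Filter.atTop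
      (nhds (dist a b)) := by
    have t1 := hpa.dist hqb
    have t2 := hs0.max ht0
    rw [max_self] at t2
    have := t1.add t2
    rwa [add_zero] at this
  have L1 : Filter.Tendsto (fun i => Real.log (dist (p i) ω.1 + max (s i) ω.2))
      Filter.atTop (nhds (Real.log (dist a ω.1 + ω.2))) :=
    ((Real.continuousAt_log hposa.ne').tendsto).comp l1
  have L2 : Filter.Tendsto (fun i => Real.log (dist (q i) ω.1 + max (t i) ω.2))
      Filter.atTop (nhds (Real.log (dist b ω.1 + ω.2))) :=
    ((Real.continuousAt_log hposb.ne').tendsto).comp l2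
  have L3 : Filter.Tendsto (fun i => Real.log (dist (p i) (q i) + max (s i) (t i)))
      Filter.atTop (nhds (Real.log (dist a b))) :=
    ((Real.continuousAt_log hdab.ne').tendsto).comp l3
  set Lval : ℝ := Real.log (dist a ω.1 + ω.2) + Real.log (dist b ω.1 + ω.2)
      - Real.log ω.2 - Real.log (dist a b) with hLv
  clear_value Lval
  have hPlim : Filter.Tendsto P Filter.atTop (nhds Lval) := by
    rw [hP, hLv]
    exact ((L1.add L2).sub tendsto_const_nhds).sub L3
  have hup : ∀ᶠ i in Filter.atTop, g i ≤ P i + K :=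
    Filter.Eventually.of_forall fun i => (hPg i).2
  have hdown : ∀ᶠ i in Filter.atTop, P i - K ≤ g i :=
    Filter.Eventually.of_forall fun i => (hPg i).1
  have hPK_up : Filter.Tendsto (fun i => P i + K) Filter.atTop (nhds (Lval + K)) :=
    hPlim.add tendsto_const_nhds
  have hPK_down : Filter.Tendsto (fun i => P i - K) Filter.atTop (nhds (Lval - K)) :=
    hPlim.sub tendsto_const_nhds
  have hgbdd_above : Filter.IsBoundedUnder (· ≤ ·) Filter.atTop g :=
    hPK_up.isBoundedUnder_le.mono_le hup
  have hgbdd_below : Filter.IsBoundedUnder (· ≥ ·) Filter.atTop g :=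
    hPK_down.isBoundedUnder_ge.mono_ge hdown
  have hub : Filter.liminf g Filter.atTop ≤ Lval + K := by
    have := Filter.liminf_le_liminf hup hgbdd_below
      (hPK_up.isBoundedUnder_le.isCoboundedUnder_ge)
    rwa [hPK_up.liminf_eq] at this
  have hlb : Lval - K ≤ Filter.liminf g Filter.atTop := by
    have := Filter.liminf_le_liminf hdown hPK_down.isBoundedUnder_ge
      (hgbdd_above.isCoboundedUnder_ge)
    rwa [hPK_down.liminf_eq] at this
  -- final estimate
  have hdaD : dist a ω.1 ≤ D := by
    rw [hD]
    exact Metric.dist_le_diam_of_mem isCompact_univ.isBounded (mem_univ _) (mem_univ _)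
  have hdbD : dist b ω.1 ≤ D := by
    rw [hD]
    exact Metric.dist_le_diam_of_mem isCompact_univ.isBounded (mem_univ _) (mem_univ _)
  have hS1a : Real.log ω.2 ≤ Real.log (dist a ω.1 + ω.2) :=
    Real.log_le_log hm (le_add_of_nonneg_left dist_nonneg)
  have hS2a : Real.log (dist a ω.1 + ω.2) ≤ Real.log (D + ω.2) :=
    Real.log_le_log hposa (by linarith)
  have hS1b : Real.log ω.2 ≤ Real.log (dist b ω.1 + ω.2) :=
    Real.log_le_log hm (le_add_of_nonneg_left dist_nonneg)
  have hS2b : Real.log (dist b ω.1 + ω.2) ≤ Real.log (D + ω.2) :=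
    Real.log_le_log hposb (by linarith)
  rw [abs_le]
  constructor
  · have := neg_abs_le (Real.log ω.2)
    have := neg_abs_le (Real.log (D + ω.2))
    have := le_abs_self (Real.log ω.2)
    have := le_abs_self (Real.log (D + ω.2))
    linarith [hLv, hlb]
  · have := neg_abs_le (Real.log ω.2)
    have := neg_abs_le (Real.log (D + ω.2))
    have := le_abs_self (Real.log ω.2)
    have := le_abs_self (Real.log (D + ω.2))
    linarith [hLv, hub]
end

section
/- Let (Y, d_Y) be a metric space with the Balogh–Schramm distance ρ on Y × (0, ∞). Fix p ∈ Y and 0 < a ≤ b. Then the 'vertical' path γ : [a², b²] → Y × (0, ∞), γ(t) = (p, √t), has ρ-length (eVariationOn) equal to log(b/a), which equals ρ((p,a),(p,b)); in particular γ is a geodesic segment up to reparametrization. -/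
open Set

lemma BS_same {Y : Type*} [MetricSpace Y] (p : Y) {u v : ℝ} (hu : 0 < u) (huv : u ≤ v) :
    BS (p, u) (p, v) = Real.log v - Real.log u := by
  have hv : 0 < v := hu.trans_le huv
  have hmax : max u v = v := max_eq_right huv
  have hsq : Real.sqrt (u * v) ≠ 0 := by positivity
  unfold BS
  simp only [dist_self, zero_add, hmax]
  rw [Real.log_div hv.ne' hsq, Real.log_sqrt (by positivity),
    Real.log_mul hu.ne' hv.ne']
  ring

lemma BS_vert {Y : Type*} [MetricSpace Y] (p : Y) {u v : ℝ} (hu : 0 < u) (huv : u ≤ v) :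
    BS (p, Real.sqrt u) (p, Real.sqrt v) = (Real.log v - Real.log u) / 2 := by
  rw [BS_same p (Real.sqrt_pos.mpr hu) (Real.sqrt_le_sqrt huv),
    Real.log_sqrt hu.le, Real.log_sqrt (hu.trans_le huv).le]
  ring

/-- the vertical path `t ↦ (p, √t)` on `[a², b²]` has
Balogh–Schramm length `log(b/a)`, which equals `ρ((p,a),(p,b))`; in particular
it is a geodesic segment up to reparametrization. -/
theorem stmt11 {Y : Type*} [MetricSpace Y] (p : Y) {a b : ℝ} (ha : 0 < a) (hab : a ≤ b) :
    lengthOn (BS (Y := Y)) (fun t => (p, Real.sqrt t)) (Icc (a ^ 2) (b ^ 2)) =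
        ENNReal.ofReal (Real.log (b / a)) ∧
      Real.log (b / a) = BS (p, a) (p, b) := by
  have hb : 0 < b := ha.trans_le hab
  have hlog : Real.log (b / a) = Real.log b - Real.log a := Real.log_div hb.ne' ha.ne'
  constructor
  · apply le_antisymm
    · apply iSup_le
      rintro ⟨n, u, hmono, hmem⟩
      have hupos : ∀ i, 0 < u i := fun i => lt_of_lt_of_le (by positivity) (hmem i).1
      have hterm : ∀ i, BS ((fun t => (p, Real.sqrt t)) (u i))
          ((fun t => (p, Real.sqrt t)) (u (i + 1)))
          = Real.log (u (i + 1)) / 2 - Real.log (u i) / 2 := by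
        intro i
        simp only
        rw [BS_vert p (hupos i) (hmono (Nat.le_succ i))]
        ring
      simp only [hterm]
      rw [← ENNReal.ofReal_sum_of_nonneg (fun i _ => by
        have := Real.log_le_log (hupos i) (hmono (Nat.le_succ i))
        linarith)]
      rw [Finset.sum_range_sub (fun i => Real.log (u i) / 2)]
      apply ENNReal.ofReal_le_ofReal
      have h1 : Real.log (u n) ≤ Real.log (b ^ 2) :=
        Real.log_le_log (hupos n) (hmem n).2
      have h2 : Real.log (a ^ 2) ≤ Real.log (u 0) :=
        Real.log_le_log (by positivity) (hmem 0).1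
      simp only [Real.log_pow] at h1 h2
      push_cast at h1 h2
      rw [hlog]; linarith
    · have hmono : Monotone (fun i : ℕ => if i = 0 then a ^ 2 else b ^ 2) := by
        intro i j hij
        dsimp only
        split <;> split <;>
          first
          | rfl
          | exact pow_le_pow_left₀ ha.le hab 2
          | omega
      have hmem : ∀ i, (if i = 0 then a ^ 2 else b ^ 2) ∈ Icc (a ^ 2) (b ^ 2) := by
        intro i
        split <;> constructor <;>
          first | rfl | exact pow_le_pow_left₀ ha.le hab 2 | exact le_refl _
      refine le_trans ?_ (le_iSup _ (⟨1, ⟨fun i => if i = 0 then a ^ 2 else b ^ 2,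
        hmono, hmem⟩⟩ : ℕ × { u : ℕ → ℝ // Monotone u ∧ ∀ i, u i ∈ Icc (a^2) (b^2) }))
      simp only [Finset.sum_range_one]
      norm_num
      rw [BS_vert p (by positivity) (pow_le_pow_left₀ ha.le hab 2)]
      rw [Real.log_pow, Real.log_pow, hlog]
      exact ENNReal.ofReal_le_ofReal (by push_cast; linarith)
  · rw [BS_same p ha hab, hlog]
end

section
/- Let (Y, d_Y) be a metric space with the Balogh–Schramm distance ρ on Y × (0, ∞). Let L ≥ 0, let α : [0, L] → Y satisfy d_Y(α(t), α(t')) = |t − t'| for all t, t' ∈ [0, L] (a unit-speed geodesic segment), and fix s > 0. Then the 'horizontal' path γ : [0, L] → Y × (0, ∞), γ(t) = (α(t), s), has ρ-length (eVariationOn) equal to 2L/s. -/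
open Set

lemma BS_horiz {Y : Type*} [MetricSpace Y] (p q : Y) {s : ℝ} (hs : 0 < s) :
    BS (p, s) (q, s) = 2 * Real.log ((dist p q + s) / s) := by
  simp [BS, max_self, Real.sqrt_mul_self hs.le]

/-- the horizontal path `t ↦ (α(t), s)` over a unit-speed geodesic
segment `α : [0, L] → Y` has Balogh–Schramm length `2L/s`. -/
theorem stmt12 {Y : Type*} [MetricSpace Y] {L : ℝ} (hL : 0 ≤ L) (α : ℝ → Y)
    (hα : ∀ t ∈ Icc (0:ℝ) L, ∀ t' ∈ Icc (0:ℝ) L, dist (α t) (α t') = |t - t'|)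
    {s : ℝ} (hs : 0 < s) :
    lengthOn (BS (Y := Y)) (fun t => (α t, s)) (Icc (0:ℝ) L) =
      ENNReal.ofReal (2 * L / s) := by
  apply le_antisymm
  · -- upper bound
    apply iSup_le
    rintro ⟨n, u, hmono, hmem⟩
    have h1 : ∀ i ∈ Finset.range n,
        ENNReal.ofReal (BS ((α (u i), s)) ((α (u (i+1)), s)))
          ≤ ENNReal.ofReal (2 * (u (i+1) - u i) / s) := by
      intro i _
      apply ENNReal.ofReal_le_ofReal
      have hΔ : 0 ≤ u (i+1) - u i := sub_nonneg.2 (hmono (Nat.le_succ i))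
      have hd : dist (α (u i)) (α (u (i+1))) = u (i+1) - u i := by
        rw [hα _ (hmem i) _ (hmem (i+1)), abs_sub_comm,
          abs_of_nonneg hΔ]
      rw [BS_horiz _ _ hs, hd]
      have hx : 0 < (u (i+1) - u i + s) / s := by
        apply div_pos (by linarith) hs
      have := Real.log_le_sub_one_of_pos hx
      have hxx : (u (i+1) - u i + s) / s - 1 = (u (i+1) - u i) / s := by
        field_simp
        ring
      rw [hxx] at this
      rw [mul_div_assoc]
      linarith
    calc ∑ i ∈ Finset.range n,
          ENNReal.ofReal (BS ((α (u i), s)) ((α (u (i+1)), s)))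
        ≤ ∑ i ∈ Finset.range n, ENNReal.ofReal (2 * (u (i+1) - u i) / s) :=
          Finset.sum_le_sum h1
      _ = ENNReal.ofReal (∑ i ∈ Finset.range n, 2 * (u (i+1) - u i) / s) := by
          rw [ENNReal.ofReal_sum_of_nonneg]
          intro i _
          have hΔ : 0 ≤ u (i+1) - u i := sub_nonneg.2 (hmono (Nat.le_succ i))
          positivity
      _ ≤ ENNReal.ofReal (2 * L / s) := by
          apply ENNReal.ofReal_le_ofReal
          have hsum : ∑ i ∈ Finset.range n, 2 * (u (i+1) - u i) / s
              = 2 * (u n - u 0) / s := by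
            rw [← Finset.sum_range_sub u n, Finset.mul_sum, Finset.sum_div]
          rw [hsum]
          have h0 : 0 ≤ u 0 := (hmem 0).1
          have hn : u n ≤ L := (hmem n).2
          gcongr
          linarith
  · -- lower bound
    have key : ∀ n : ℕ, 0 < n →
        ENNReal.ofReal (2 * ((n:ℝ) * Real.log (1 + (L/s) / n)))
          ≤ lengthOn (BS (Y := Y)) (fun t => (α t, s)) (Icc (0:ℝ) L) := by
      intro n hn
      have hn' : (0:ℝ) < n := Nat.cast_pos.2 hn
      set u : ℕ → ℝ := fun i => min ((i:ℝ) * (L/n)) L with hu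
      have hmono : Monotone u := fun i j hij =>
        min_le_min (mul_le_mul_of_nonneg_right (Nat.cast_le.2 hij) (by positivity)) le_rfl
      have hmem : ∀ i, u i ∈ Icc (0:ℝ) L := fun i =>
        ⟨le_min (by positivity) hL, min_le_right _ _⟩
      have huval : ∀ i : ℕ, i ≤ n → u i = (i:ℝ) * (L/n) := by
        intro i hi
        apply min_eq_left
        calc (i:ℝ) * (L/n) ≤ (n:ℝ) * (L/n) :=
              mul_le_mul_of_nonneg_right (Nat.cast_le.2 hi) (by positivity)
          _ = L := by field_simp
      refine le_trans ?_ (le_iSup _ (⟨n, u, hmono, hmem⟩ :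
        ℕ × { u : ℕ → ℝ // Monotone u ∧ ∀ i, u i ∈ Icc (0:ℝ) L }))
      have hterm : ∀ i ∈ Finset.range n,
          ENNReal.ofReal (BS ((α (u i), s)) ((α (u (i+1)), s)))
            = ENNReal.ofReal (2 * Real.log (1 + (L/s) / n)) := by
        intro i hi
        rw [Finset.mem_range] at hi
        congr 1
        rw [BS_horiz _ _ hs]
        have hd : dist (α (u i)) (α (u (i+1))) = L / n := by
          rw [hα _ (hmem i) _ (hmem (i+1)), huval i hi.le, huval (i+1) hi,
            ← sub_mul]
          have : ((i:ℝ) - (i+1:ℕ)) = -1 := by push_cast; ring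
          rw [this]
          have hln : (0:ℝ) ≤ L / n := div_nonneg hL hn'.le
          rw [abs_of_nonpos (by linarith : (-1:ℝ) * (L/n) ≤ 0)]
          ring
        rw [hd]
        congr 2
        field_simp
        ring
      rw [Finset.sum_congr rfl hterm, Finset.sum_const, Finset.card_range,
        nsmul_eq_mul]
      have hlog : 0 ≤ Real.log (1 + (L/s) / n) := by
        apply Real.log_nonneg
        have : 0 ≤ (L/s)/n := by positivity
        linarith
      rw [← ENNReal.ofReal_natCast n, ← ENNReal.ofReal_mul (by positivity)]
      apply ENNReal.ofReal_le_ofReal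
      ring_nf
      exact le_rfl
    have htend : Filter.Tendsto
        (fun n : ℕ => ENNReal.ofReal (2 * ((n:ℝ) * Real.log (1 + (L/s) / n))))
        Filter.atTop (nhds (ENNReal.ofReal (2 * L / s))) := by
      have h1 : Filter.Tendsto (fun n : ℕ => (n:ℝ) * Real.log (1 + (L/s) / n))
          Filter.atTop (nhds (L/s)) :=
        (Real.tendsto_mul_log_one_add_div_atTop (L/s)).comp
          tendsto_natCast_atTop_atTop
      have h2 := h1.const_mul (2:ℝ)
      have := (ENNReal.continuous_ofReal.tendsto _).comp h2
      simpa [mul_div_assoc, Function.comp_def] using this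
    refine le_of_tendsto htend ?_
    filter_upwards [Filter.eventually_gt_atTop 0] with n hn
    exact key n hn
end

section
/- Let (Y, d_Y) be a metric space with the Balogh–Schramm distance ρ on Y × (0, ∞). Let u > 0, let S ⊆ ℝ, and let γ : S → Y × (0, ∞), γ(t) = (α(t), h(t)), satisfy h(t) ≤ u for all t ∈ S. Then the ρ-length (eVariationOn) on S of the projected map t ↦ (α(t), u) is at most the ρ-length of γ on S. -/
open Set

/-- projecting a path of `X_M` lying below height `u` to the
constant height `u` does not increase its Balogh–Schramm length. -/
theorem stmt14 {Y : Type*} [MetricSpace Y] {u : ℝ} (hu : 0 < u) (S : Set ℝ)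
    (α : ℝ → Y) (h : ℝ → ℝ) (hh : ∀ t ∈ S, 0 < h t ∧ h t ≤ u) :
    lengthOn (BS (Y := Y)) (fun t => (α t, u)) S ≤
      lengthOn (BS (Y := Y)) (fun t => (α t, h t)) S := by
  have key : ∀ p q : Y, ∀ s t : ℝ, 0 < s → s ≤ u → 0 < t → t ≤ u →
      BS (p, u) (q, u) ≤ BS (p, s) (q, t) := by
    intro p q s t hs hsu ht htu
    have hd : (0:ℝ) ≤ dist p q := dist_nonneg
    have hst : 0 < Real.sqrt (s * t) := Real.sqrt_pos.2 (mul_pos hs ht)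
    have hstu : Real.sqrt (s * t) ≤ u := by
      calc Real.sqrt (s * t) ≤ Real.sqrt (u * u) := by
            apply Real.sqrt_le_sqrt; nlinarith
        _ = u := by rw [Real.sqrt_mul_self hu.le]
    have hstm : Real.sqrt (s * t) ≤ max s t := by
      calc Real.sqrt (s * t) ≤ Real.sqrt (max s t * max s t) := by
            apply Real.sqrt_le_sqrt
            exact mul_le_mul (le_max_left _ _) (le_max_right _ _) ht.le
              (le_trans hs.le (le_max_left _ _))
        _ = max s t := Real.sqrt_mul_self (le_trans hs.le (le_max_left _ _))
    unfold BS
    simp only [max_self]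
    rw [Real.sqrt_mul_self hu.le]
    apply mul_le_mul_of_nonneg_left _ (by norm_num : (0:ℝ) ≤ 2)
    apply Real.log_le_log (by positivity)
    rw [div_le_div_iff₀ hu hst]
    nlinarith
  unfold lengthOn
  refine iSup_mono fun p => Finset.sum_le_sum fun i _ => ENNReal.ofReal_le_ofReal ?_
  obtain ⟨n, f, hmono, hmem⟩ := p
  exact key _ _ _ _ (hh _ (hmem i)).1 (hh _ (hmem i)).2
    (hh _ (hmem (i+1))).1 (hh _ (hmem (i+1))).2
end

section
/- Let (Y, d_Y) be a metric space with the Balogh–Schramm distance ρ on Y × (0, ∞). Let x = (p, s), y = (q, t), z = (r, u) be points of Y × (0, ∞) with s ≤ t, z ≠ x and z ≠ y. Then ρ(x,y) = ρ(x,z) + ρ(z,y) if and only if s ≤ u ≤ t and r = p. -/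
open Set

/-- equality case in the triangle inequality for the
Balogh–Schramm distance: for `x = (p,s)`, `y = (q,t)`, `z = (r,u)` with `s ≤ t`
and `z ∉ {x, y}`, one has `ρ(x,y) = ρ(x,z) + ρ(z,y)` iff `s ≤ u ≤ t` and `r = p`. -/
theorem stmt15 {Y : Type*} [MetricSpace Y] (p q r : Y) {s t u : ℝ}
    (hs : 0 < s) (ht : 0 < t) (hu : 0 < u) (hst : s ≤ t)
    (hzx : (r, u) ≠ (p, s)) (hzy : (r, u) ≠ (q, t)) :
    BS (p, s) (q, t) = BS (p, s) (r, u) + BS (r, u) (q, t) ↔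
      (s ≤ u ∧ u ≤ t ∧ r = p) := by
  have ha : 0 ≤ dist p r := dist_nonneg
  have hb : 0 ≤ dist r q := dist_nonneg
  have hc : 0 ≤ dist p q := dist_nonneg
  have htri : dist p q ≤ dist p r + dist r q := dist_triangle p r q
  set a := dist p r with hadef
  set b := dist r q with hbdef
  set c := dist p q with hcdef
  set M := max s u with hM
  set N := max u t with hN
  have hsqst : (0:ℝ) < Real.sqrt (s*t) := Real.sqrt_pos.2 (by positivity)
  have hsqsu : (0:ℝ) < Real.sqrt (s*u) := Real.sqrt_pos.2 (by positivity)
  have hsqut : (0:ℝ) < Real.sqrt (u*t) := Real.sqrt_pos.2 (by positivity)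
  have hMpos : 0 < M := lt_max_of_lt_left hs
  have hNpos : 0 < N := lt_max_of_lt_left hu
  set A := (c + t) / Real.sqrt (s*t) with hAdef
  set B := (a + M) / Real.sqrt (s*u) with hBdef
  set C := (b + N) / Real.sqrt (u*t) with hCdef
  have hApos : 0 < A := div_pos (by linarith) hsqst
  have hBpos : 0 < B := div_pos (by linarith) hsqsu
  have hCpos : 0 < C := div_pos (by linarith) hsqut
  have hBS : (BS (p, s) (q, t) = BS (p, s) (r, u) + BS (r, u) (q, t)) ↔ A = B * C := by
    show 2 * Real.log ((c + max s t) / Real.sqrt (s*t)) =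
        2 * Real.log ((a + M) / Real.sqrt (s*u)) +
        2 * Real.log ((b + N) / Real.sqrt (u*t)) ↔ _
    rw [max_eq_right hst]
    constructor
    · intro h
      have hlog : Real.log A = Real.log (B * C) := by
        rw [Real.log_mul hBpos.ne' hCpos.ne']
        linarith
      exact Real.log_injOn_pos (mem_Ioi.2 hApos) (mem_Ioi.2 (mul_pos hBpos hCpos)) hlog
    · intro h
      rw [show (c + t) / Real.sqrt (s*t) = A from rfl, h,
        Real.log_mul hBpos.ne' hCpos.ne']
      ring
  have hsqrteq : Real.sqrt (s*u) * Real.sqrt (u*t) = u * Real.sqrt (s*t) := by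
    rw [← Real.sqrt_mul (by positivity), show s*u*(u*t) = (u*u)*(s*t) by ring,
      Real.sqrt_mul (by positivity), Real.sqrt_mul_self hu.le]
  have halg : A = B * C ↔ (c + t) * u = (a + M) * (b + N) := by
    rw [hAdef, hBdef, hCdef, div_mul_div_comm, hsqrteq,
      div_eq_div_iff hsqst.ne' (by positivity : u * Real.sqrt (s*t) ≠ 0),
      show (c + t) * (u * Real.sqrt (s*t)) = ((c + t) * u) * Real.sqrt (s*t) by ring]
    exact (mul_left_injective₀ hsqst.ne').eq_iff
  rw [hBS, halg]
  have hzx' : ¬(r = p ∧ u = s) := by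
    intro ⟨h1, h2⟩; exact hzx (by rw [h1, h2])
  have hzy' : ¬(r = q ∧ u = t) := by
    intro ⟨h1, h2⟩; exact hzy (by rw [h1, h2])
  constructor
  · intro h
    rcases lt_or_ge u s with hus | hsu
    · exfalso
      have hMs : M = s := max_eq_left hus.le
      have hNt : N = t := max_eq_right (hus.trans_le hst).le
      rw [hMs, hNt] at h
      nlinarith [mul_nonneg ha hb, mul_nonneg ha (by linarith : (0:ℝ) ≤ t - u),
        mul_nonneg hb (by linarith : (0:ℝ) ≤ s - u), mul_pos (sub_pos.2 hus) ht,
        mul_nonneg (by linarith : (0:ℝ) ≤ a + b - c) hu.le]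
    rcases lt_or_ge t u with htu | hut
    · exfalso
      have hMu : M = u := max_eq_right hsu
      have hNu : N = u := max_eq_left htu.le
      rw [hMu, hNu] at h
      nlinarith [mul_nonneg ha hb, mul_pos hu (sub_pos.2 htu),
        mul_nonneg (by linarith : (0:ℝ) ≤ a + b - c) hu.le]
    refine ⟨hsu, hut, ?_⟩
    have hMu : M = u := max_eq_right hsu
    have hNt : N = t := max_eq_right hut
    rw [hMu, hNt] at h
    -- (a+u)(b+t) - (c+t)u = ab + a(t-u) + (a+b-c)u = 0, all terms ≥ 0
    have h1 : a * b + a * (t - u) + (a + b - c) * u = 0 := by linear_combination -h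
    have k1 : 0 ≤ a * (t - u) := mul_nonneg ha (by linarith)
    have k2 : 0 ≤ (a + b - c) * u := mul_nonneg (by linarith) hu.le
    have k3 : 0 ≤ a * b := mul_nonneg ha hb
    have e1 : a * b = 0 := by linarith
    have e2 : a * (t - u) = 0 := by linarith
    by_contra hrp
    have ha0 : a ≠ 0 := fun h0 => hrp (by rwa [hadef, dist_eq_zero, eq_comm] at h0)
    have hb0 : b = 0 := by
      rcases mul_eq_zero.1 e1 with h' | h'
      · exact absurd h' ha0
      · exact h'
    have hut' : u = t := by
      rcases mul_eq_zero.1 e2 with h' | h'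
      · exact absurd h' ha0
      · linarith
    exact hzy' ⟨by rwa [hbdef, dist_eq_zero] at hb0, hut'⟩
  · rintro ⟨hsu, hut, hrp⟩
    have ha0 : a = 0 := by rw [hadef, hrp, dist_self]
    have hbc : b = c := by rw [hbdef, hcdef, hrp]
    rw [hM, hN, max_eq_right hsu, max_eq_right hut, ha0, hbc]
    ring
end

section
/- Let (X, d) be a compact metric space which is a length space: for all x, y ∈ X, d(x,y) equals the infimum of the lengths (eVariationOn with respect to d) of continuous paths joining x and y in X. Then (X, d) is geodesic: for every x, y ∈ X there is an isometric embedding γ : [0, d(x,y)] → X with γ(0) = x and γ(d(x,y)) = y. -/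
open Set

lemma approxMid {X : Type*} [MetricSpace X]
    (hlen : ∀ x y : X, ENNReal.ofReal (dist x y) =
      sInf {L : ENNReal | ∃ (a b : ℝ) (γ : ℝ → X), a ≤ b ∧
        ContinuousOn γ (Icc a b) ∧ γ a = x ∧ γ b = y ∧
        eVariationOn γ (Icc a b) = L})
    (x y : X) {ε : ℝ} (hε : 0 < ε) :
    ∃ m : X, dist x m ≤ dist x y / 2 + ε ∧ dist m y ≤ dist x y / 2 + ε := by
  set d := dist x y with hd
  have hd0 : 0 ≤ d := dist_nonneg
  have hsInf : sInf {L : ENNReal | ∃ (a b : ℝ) (γ : ℝ → X), a ≤ b ∧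
        ContinuousOn γ (Icc a b) ∧ γ a = x ∧ γ b = y ∧
        eVariationOn γ (Icc a b) = L} < ENNReal.ofReal (d + ε/2) := by
    rw [← hlen x y]
    rw [ENNReal.ofReal_lt_ofReal_iff (by linarith)]
    linarith
  obtain ⟨L, hLS, hLlt⟩ := sInf_lt_iff.mp hsInf
  obtain ⟨a, b, γ, hab, hcont, hγa, hγb, rfl⟩ := hLS
  set s := Icc a b with hs
  have has : a ∈ s := ⟨le_rfl, hab⟩
  have hbs : b ∈ s := ⟨hab, le_rfl⟩
  have hBV : BoundedVariationOn γ s := hLlt.ne_top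
  have hLBV : LocallyBoundedVariationOn γ s := hBV.locallyBoundedVariationOn
  set g : ℝ → ℝ := variationOnFromTo γ s a with hg
  set Vr : ℝ := g b with hVr
  have hVr_le : Vr ≤ d + ε/2 := by
    have : g b = (eVariationOn γ (s ∩ Icc a b)).toReal := variationOnFromTo.eq_of_le γ s hab
    rw [hVr, this]
    have : s ∩ Icc a b = s := by rw [hs, inter_self]
    rw [this]
    exact ENNReal.toReal_le_of_le_ofReal (by linarith) hLlt.le
  have hga : g a = 0 := variationOnFromTo.self γ s a
  have hVr0 : 0 ≤ Vr := variationOnFromTo.nonneg_of_le γ s hab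
  -- distance bounds along the path
  have hdistx : ∀ t ∈ s, dist x (γ t) ≤ g t := by
    intro t hts
    rw [← hγa]
    have heq : variationOnFromTo γ s a t = (eVariationOn γ (s ∩ Icc a t)).toReal :=
      variationOnFromTo.eq_of_le γ s hts.1
    rw [hg, heq]
    have hBV' : BoundedVariationOn γ (s ∩ Icc a t) := hBV.mono inter_subset_left
    exact hBV'.dist_le ⟨has, le_rfl, hts.1⟩ ⟨hts, hts.1, le_rfl⟩
  have hdisty : ∀ t ∈ s, dist (γ t) y ≤ Vr - g t := by
    intro t hts
    have hadd := variationOnFromTo.add hLBV has hts hbs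
    have heq : variationOnFromTo γ s t b = (eVariationOn γ (s ∩ Icc t b)).toReal :=
      variationOnFromTo.eq_of_le γ s hts.2
    have hBV' : BoundedVariationOn γ (s ∩ Icc t b) := hBV.mono inter_subset_left
    have := hBV'.dist_le (x := t) (y := b) ⟨hts, le_rfl, hts.2⟩ ⟨hbs, hts.2, le_rfl⟩
    rw [← hγb]
    rw [← heq] at this
    linarith [this, hadd]
  -- the crossing time
  set T : Set ℝ := {t | t ∈ s ∧ g t ≤ Vr / 2} with hT
  have haT : a ∈ T := ⟨has, by rw [hga]; linarith⟩
  have hTne : T.Nonempty := ⟨a, haT⟩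
  have hTbdd : BddAbove T := ⟨b, fun t ht => ht.1.2⟩
  set c : ℝ := sSup T with hc
  have hac : a ≤ c := le_csSup hTbdd haT
  have hcb : c ≤ b := csSup_le hTne fun t ht => ht.1.2
  have hcs : c ∈ s := ⟨hac, hcb⟩
  -- continuity at c
  have hcw : ContinuousWithinAt γ s c := hcont c hcs
  rw [Metric.continuousWithinAt_iff] at hcw
  obtain ⟨δ, hδ0, hδ⟩ := hcw (ε/4) (by linarith)
  -- pick t1 ∈ T close to c
  obtain ⟨t1, ht1T, ht1lt⟩ := exists_lt_of_lt_csSup hTne (by linarith : c - δ < c)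
  have ht1le : t1 ≤ c := le_csSup hTbdd ht1T
  have ht1d : dist (γ t1) (γ c) < ε/4 := by
    apply hδ ht1T.1
    rw [Real.dist_eq, abs_lt]
    constructor <;> linarith
  -- pick t2
  set t2 : ℝ := min b (c + δ/2) with ht2
  have ht2s : t2 ∈ s := ⟨le_min hab (by linarith), min_le_left _ _⟩
  have hct2 : c ≤ t2 := le_min hcb (by linarith)
  have ht2d : dist (γ t2) (γ c) < ε/4 := by
    apply hδ ht2s
    rw [Real.dist_eq, abs_lt]
    have : t2 ≤ c + δ/2 := min_le_right _ _
    constructor <;> linarith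
  refine ⟨γ t2, ?_, ?_⟩
  · have h1 : dist x (γ t2) ≤ dist x (γ t1) + dist (γ t1) (γ c) + dist (γ c) (γ t2) :=
      dist_triangle4 x (γ t1) (γ c) (γ t2)
    have h2 : dist x (γ t1) ≤ g t1 := hdistx t1 ht1T.1
    have h3 : g t1 ≤ Vr / 2 := ht1T.2
    rw [dist_comm (γ c) (γ t2)] at h1
    linarith
  · by_cases ht2T : t2 ∈ T
    · -- forces t2 = c hence t2 = b, γ t2 = y
      have : t2 ≤ c := le_csSup hTbdd ht2T
      have ht2c : t2 = c := le_antisymm this hct2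
      have hbc : t2 = b := by
        rcases min_cases b (c + δ/2) with ⟨h, _⟩ | ⟨h, h'⟩
        · exact ht2.trans h
        · exfalso
          have h2 : t2 = c + δ/2 := ht2.trans h
          have h3 := ht2c.symm.trans h2
          linarith
      rw [hbc, hγb, dist_self]
      linarith
    · have h4 : Vr / 2 < g t2 := by
        have := ht2T
        rw [hT, mem_setOf_eq, not_and_or] at this
        rcases this with h | h
        · exact absurd ht2s h
        · linarith [not_le.mp h]
      have h5 := hdisty t2 ht2s
      linarith

lemma existsMid {X : Type*} [MetricSpace X] [CompactSpace X]
    (hlen : ∀ x y : X, ENNReal.ofReal (dist x y) =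
      sInf {L : ENNReal | ∃ (a b : ℝ) (γ : ℝ → X), a ≤ b ∧
        ContinuousOn γ (Icc a b) ∧ γ a = x ∧ γ b = y ∧
        eVariationOn γ (Icc a b) = L})
    (x y : X) :
    ∃ m : X, dist x m = dist x y / 2 ∧ dist m y = dist x y / 2 := by
  have H : ∀ n : ℕ, ∃ m : X, dist x m ≤ dist x y / 2 + 1/(n+1) ∧
      dist m y ≤ dist x y / 2 + 1/(n+1) := by
    intro n
    exact approxMid hlen x y (by positivity)
  choose u hu1 hu2 using H
  obtain ⟨m, -, φ, hφ, htend⟩ := isCompact_univ.tendsto_subseq (fun n => mem_univ (u n))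
  have hb : Filter.Tendsto (fun n : ℕ => dist x y / 2 + 1/((φ n : ℝ)+1)) Filter.atTop
      (nhds (dist x y / 2)) := by
    have h0 : Filter.Tendsto (fun n : ℕ => 1/((φ n : ℝ)+1)) Filter.atTop (nhds 0) :=
      tendsto_one_div_add_atTop_nhds_zero_nat.comp hφ.tendsto_atTop
    simpa using Filter.Tendsto.add (tendsto_const_nhds) h0
  have h1 : dist x m ≤ dist x y / 2 := by
    apply le_of_tendsto_of_tendsto' ((tendsto_const_nhds).dist htend) hb
    intro n; exact hu1 (φ n)
  have h2 : dist m y ≤ dist x y / 2 := by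
    apply le_of_tendsto_of_tendsto' (htend.dist tendsto_const_nhds) hb
    intro n; exact hu2 (φ n)
  have h3 := dist_triangle x m y
  exact ⟨m, by linarith, by linarith⟩
open Set

noncomputable def dyadicPt {X : Type*} (x y : X) (mid : X → X → X) : ℕ → ℕ → X
  | 0, k => if k = 0 then x else y
  | (n+1), k => if k % 2 = 0 then dyadicPt x y mid n (k/2)
      else mid (dyadicPt x y mid n (k/2)) (dyadicPt x y mid n (k/2+1))

section dyadic
variable {X : Type*} [MetricSpace X] (x y : X) (mid : X → X → X)

lemma dyadicPt_zero (n : ℕ) : dyadicPt x y mid n 0 = x := by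
  induction n with
  | zero => simp [dyadicPt]
  | succ n ih => simp [dyadicPt, ih]

lemma dyadicPt_top (n : ℕ) : dyadicPt x y mid n (2^n) = y := by
  induction n with
  | zero => simp [dyadicPt]
  | succ n ih =>
      have h1 : 2^(n+1) % 2 = 0 := by omega
      have h2 : 2^(n+1) / 2 = 2^n := by omega
      simp [dyadicPt, h1, h2, ih]

lemma dyadicPt_double (n k : ℕ) :
    dyadicPt x y mid (n+1) (2*k) = dyadicPt x y mid n k := by
  have h1 : (2*k) % 2 = 0 := by omega
  have h2 : (2*k) / 2 = k := by omega
  simp [dyadicPt, h1, h2]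

lemma dyadicPt_lift (n m k : ℕ) :
    dyadicPt x y mid (n+m) (k * 2^m) = dyadicPt x y mid n k := by
  induction m with
  | zero => simp
  | succ m ih =>
      have h : k * 2^(m+1) = 2 * (k * 2^m) := by ring
      rw [h, show n + (m+1) = (n+m)+1 from rfl, dyadicPt_double, ih]

variable (hm1 : ∀ p q, dist p (mid p q) = dist p q / 2)
         (hm2 : ∀ p q, dist (mid p q) q = dist p q / 2)
include hm1 hm2

lemma dyadicPt_adj : ∀ n k, k < 2^n →
    dist (dyadicPt x y mid n k) (dyadicPt x y mid n (k+1)) = dist x y / 2^n := by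
  intro n
  induction n with
  | zero =>
      intro k hk
      interval_cases k
      simp [dyadicPt]
  | succ n ih =>
      intro k hk
      rcases Nat.even_or_odd k with ⟨j, hj⟩ | ⟨j, hj⟩
      · subst hj
        have hj2 : j < 2^n := by omega
        have h1 : (j+j) % 2 = 0 := by omega
        have h2 : (j+j) / 2 = j := by omega
        have h3 : (j+j+1) % 2 = 1 := by omega
        have h4 : (j+j+1) / 2 = j := by omega
        simp only [dyadicPt, h1, h2, h3, h4]
        norm_num
        rw [hm1, ih j hj2]
        ring
      · subst hj
        have hj2 : j + 1 ≤ 2^n ∧ j < 2^n := by omega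
        have h1 : (2*j+1) % 2 = 1 := by omega
        have h2 : (2*j+1) / 2 = j := by omega
        have h3 : (2*j+1+1) % 2 = 0 := by omega
        have h4 : (2*j+1+1) / 2 = j+1 := by omega
        simp only [dyadicPt, h1, h2, h3, h4]
        norm_num
        rw [hm2, ih j hj2.2]
        ring

lemma dyadicPt_dist_le : ∀ n k j, k + j ≤ 2^n →
    dist (dyadicPt x y mid n k) (dyadicPt x y mid n (k+j)) ≤ j * (dist x y / 2^n) := by
  intro n k j
  induction j with
  | zero => simp
  | succ j ih =>
      intro h
      have h1 : k + j ≤ 2^n := by omega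
      have h2 : k + j < 2^n := by omega
      calc dist (dyadicPt x y mid n k) (dyadicPt x y mid n (k+(j+1)))
          ≤ dist (dyadicPt x y mid n k) (dyadicPt x y mid n (k+j))
            + dist (dyadicPt x y mid n (k+j)) (dyadicPt x y mid n (k+j+1)) := by
            rw [show k+(j+1) = k+j+1 from rfl]; exact dist_triangle _ _ _
        _ ≤ j * (dist x y / 2^n) + dist x y / 2^n := by
            rw [dyadicPt_adj x y mid hm1 hm2 n (k+j) h2]
            linarith [ih h1]
        _ = (j+1 : ℕ) * (dist x y / 2^n) := by push_cast; ring

lemma dyadicPt_dist (n k l : ℕ) (hkl : k ≤ l) (hl : l ≤ 2^n) :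
    dist (dyadicPt x y mid n k) (dyadicPt x y mid n l)
      = ((l : ℝ) - k) * (dist x y / 2^n) := by
  obtain ⟨j, rfl⟩ := Nat.exists_eq_add_of_le hkl
  have hup := dyadicPt_dist_le x y mid hm1 hm2 n k j hl
  have hup1 := dyadicPt_dist_le x y mid hm1 hm2 n 0 k (by omega)
  have hup2 := dyadicPt_dist_le x y mid hm1 hm2 n (k+j) (2^n - (k+j)) (by omega)
  rw [show (0:ℕ)+k = k from by omega] at hup1
  rw [show k+j+(2^n-(k+j)) = 2^n from by omega] at hup2
  rw [dyadicPt_zero] at hup1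
  rw [dyadicPt_top] at hup2
  have htri : dist x y ≤ dist x (dyadicPt x y mid n k)
      + dist (dyadicPt x y mid n k) (dyadicPt x y mid n (k+j))
      + dist (dyadicPt x y mid n (k+j)) y := dist_triangle4 _ _ _ _
  have h2n : (0:ℝ) < 2^n := by positivity
  have hcast : ((2^n - (k+j) : ℕ) : ℝ) = 2^n - k - j := by
    push_cast [Nat.cast_sub hl]; ring
  rw [hcast] at hup2
  have hk : ((k + j : ℕ) : ℝ) - k = (j : ℝ) := by push_cast; ring
  rw [hk]
  have hlow : (j : ℝ) * (dist x y / 2^n) ≤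
      dist (dyadicPt x y mid n k) (dyadicPt x y mid n (k+j)) := by
    have hD : dist x y = 2^n * (dist x y / 2^n) := by field_simp
    nlinarith [dist_nonneg (x := x) (y := y)]
  linarith

end dyadic

theorem stmt18' {X : Type*} [MetricSpace X] [CompactSpace X]
    (existsMid' : ∀ x y : X,
      ∃ m : X, dist x m = dist x y / 2 ∧ dist m y = dist x y / 2) :
    ∀ x y : X, ∃ γ : ℝ → X, γ 0 = x ∧ γ (dist x y) = y ∧
      ∀ s ∈ Icc (0:ℝ) (dist x y), ∀ t ∈ Icc (0:ℝ) (dist x y),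
        dist (γ s) (γ t) = |s - t| := by
  intro x y
  by_cases hD : dist x y = 0
  · have hxy : x = y := dist_eq_zero.mp hD
    refine ⟨fun _ => x, rfl, by rw [hD, hxy], ?_⟩
    intro s hs t ht
    rw [hD] at hs ht
    have hs0 : s = 0 := le_antisymm hs.2 hs.1
    have ht0 : t = 0 := le_antisymm ht.2 ht.1
    simp [hs0, ht0]
  set D := dist x y with hDdef
  have hD0 : 0 < D := lt_of_le_of_ne dist_nonneg (Ne.symm hD)
  choose mid hm1 hm2 using existsMid'
  set g := dyadicPt x y mid with hgdef
  set k : ℕ → ℝ → ℕ := fun n t => ⌊t * 2^n / D⌋₊ with hkdef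
  set u : ℕ → ℝ → X := fun n t => g n (k n t) with hudef
  -- basic index bounds
  have hk_le : ∀ n, ∀ t ∈ Icc (0:ℝ) D, k n t ≤ 2^n := by
    intro n t ht
    have h1 : t * 2^n / D ≤ ((2^n : ℕ) : ℝ) := by
      push_cast
      rw [div_le_iff₀ hD0]
      nlinarith [ht.2, (by positivity : (0:ℝ) < (2:ℝ)^n)]
    calc k n t ≤ ⌊((2^n : ℕ):ℝ)⌋₊ := Nat.floor_le_floor h1
      _ = 2^n := Nat.floor_natCast _
  have hk_approx : ∀ n, ∀ t ∈ Icc (0:ℝ) D,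
      |((k n t : ℝ)) * (D / 2^n) - t| ≤ D / 2^n := by
    intro n t ht
    have h2n : (0:ℝ) < 2^n := by positivity
    have hnn : 0 ≤ t * 2^n / D := by
      apply div_nonneg _ hD0.le
      nlinarith [ht.1, h2n]
    have hfl : ((k n t : ℝ)) ≤ t * 2^n / D := Nat.floor_le hnn
    have hfu : t * 2^n / D < (k n t : ℝ) + 1 := Nat.lt_floor_add_one _
    have h1 : ((k n t : ℝ)) * (D / 2^n) ≤ t := by
      calc ((k n t : ℝ)) * (D / 2^n) ≤ (t * 2^n / D) * (D / 2^n) :=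
            mul_le_mul_of_nonneg_right hfl (by positivity)
        _ = t := by field_simp
    have h2 : t < ((k n t : ℝ) + 1) * (D / 2^n) := by
      calc t = (t * 2^n / D) * (D / 2^n) := by field_simp
        _ < ((k n t : ℝ) + 1) * (D / 2^n) :=
            mul_lt_mul_of_pos_right hfu (by positivity)
    rw [abs_le]
    constructor <;> nlinarith
  -- the key distance formula
  have hdist : ∀ s ∈ Icc (0:ℝ) D, ∀ t ∈ Icc (0:ℝ) D, ∀ n m : ℕ,
      dist (u n s) (u m t)
        = |((k n s : ℝ)) * (D / 2^n) - ((k m t : ℝ)) * (D / 2^m)| := by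
    intro s hs t ht n m
    have hus : u n s = g (n+m) (k n s * 2^m) := (dyadicPt_lift x y mid n m (k n s)).symm
    have hut : u m t = g (n+m) (k m t * 2^n) := by
      rw [hudef]
      have := (dyadicPt_lift x y mid m n (k m t)).symm
      rw [add_comm m n] at this
      exact this
    have ha : k n s * 2^m ≤ 2^(n+m) := by
      rw [pow_add]
      exact Nat.mul_le_mul_right _ (hk_le n s hs)
    have hb : k m t * 2^n ≤ 2^(n+m) := by
      rw [pow_add, mul_comm (2^n) (2^m)]
      exact Nat.mul_le_mul_right _ (hk_le m t ht)
    have h2n : (0:ℝ) < 2^n := by positivity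
    have h2m : (0:ℝ) < 2^m := by positivity
    have key : ∀ i j : ℕ, i ≤ j → j ≤ 2^(n+m) →
        dist (g (n+m) i) (g (n+m) j) = ((j:ℝ) - i) * (D / 2^(n+m)) :=
      fun i j hij hj => dyadicPt_dist x y mid hm1 hm2 (n+m) i j hij hj
    rcases le_total (k n s * 2^m) (k m t * 2^n) with hle | hle
    · rw [hus, hut, key _ _ hle hb]
      rw [abs_of_nonpos, neg_sub]
      · push_cast [pow_add]
        field_simp
      · have hcast : ((k n s : ℝ)) * 2^m ≤ ((k m t : ℝ)) * 2^n := by exact_mod_cast hle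
        rw [sub_nonpos]
        have e1 : ((k n s:ℝ)) * (D/2^n) = ((k n s:ℝ) * 2^m) * (D/2^(n+m)) := by
          rw [pow_add]; field_simp
        have e2 : ((k m t:ℝ)) * (D/2^m) = ((k m t:ℝ) * 2^n) * (D/2^(n+m)) := by
          rw [pow_add]; field_simp
        rw [e1, e2]
        exact mul_le_mul_of_nonneg_right hcast (by positivity)
    · rw [hus, hut, dist_comm, key _ _ hle ha]
      rw [abs_of_nonneg]
      · push_cast [pow_add]
        field_simp
      · have hcast : ((k m t : ℝ)) * 2^n ≤ ((k n s : ℝ)) * 2^m := by exact_mod_cast hle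
        rw [sub_nonneg]
        have e1 : ((k n s:ℝ)) * (D/2^n) = ((k n s:ℝ) * 2^m) * (D/2^(n+m)) := by
          rw [pow_add]; field_simp
        have e2 : ((k m t:ℝ)) * (D/2^m) = ((k m t:ℝ) * 2^n) * (D/2^(n+m)) := by
          rw [pow_add]; field_simp
        rw [e1, e2]
        exact mul_le_mul_of_nonneg_right hcast (by positivity)
  -- geometric decay
  have hgeo : Filter.Tendsto (fun n : ℕ => D / 2^n) Filter.atTop (nhds 0) := by
    have h := tendsto_pow_atTop_nhds_zero_of_lt_one
      (by norm_num : (0:ℝ) ≤ 1/2) (by norm_num : (1:ℝ)/2 < 1)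
    have := h.const_mul D
    simpa [div_eq_mul_inv, mul_pow, inv_pow, mul_comm] using this
  -- Cauchyness
  have hCauchy : ∀ t ∈ Icc (0:ℝ) D, CauchySeq (fun n => u n t) := by
    intro t ht
    apply cauchySeq_of_le_tendsto_0 (fun N => 2 * (D / 2^N)) _ (by simpa using hgeo.const_mul 2)
    intro n m N hn hm
    have hmono : ∀ i j : ℕ, i ≤ j → D / 2^j ≤ D / 2^i := by
      intro i j hij
      apply div_le_div_of_nonneg_left hD0.le (by positivity)
      exact pow_le_pow_right₀ (by norm_num) hij
    have h1 := hk_approx n t ht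
    have h2 := hk_approx m t ht
    rw [hdist t ht t ht n m]
    calc |((k n t:ℝ)) * (D/2^n) - ((k m t:ℝ)) * (D/2^m)|
        ≤ |((k n t:ℝ)) * (D/2^n) - t| + |t - ((k m t:ℝ)) * (D/2^m)| := by
          have := abs_sub_le (((k n t:ℝ)) * (D/2^n)) t (((k m t:ℝ)) * (D/2^m))
          exact this
      _ ≤ D/2^n + D/2^m := by
          rw [abs_sub_comm t]
          exact add_le_add h1 h2
      _ ≤ 2 * (D / 2^N) := by
          have := hmono N n hn
          have := hmono N m hm
          linarith
  -- limits exist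
  have hexists : ∀ t : ℝ, ∃ p : X, t ∈ Icc (0:ℝ) D →
      Filter.Tendsto (fun n => u n t) Filter.atTop (nhds p) := by
    intro t
    by_cases ht : t ∈ Icc (0:ℝ) D
    · obtain ⟨p, hp⟩ := cauchySeq_tendsto_of_complete (hCauchy t ht)
      exact ⟨p, fun _ => hp⟩
    · exact ⟨x, fun h => absurd h ht⟩
  choose γ hγ using hexists
  have h0mem : (0:ℝ) ∈ Icc (0:ℝ) D := ⟨le_rfl, hD0.le⟩
  have hDmem : D ∈ Icc (0:ℝ) D := ⟨hD0.le, le_rfl⟩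
  refine ⟨γ, ?_, ?_, ?_⟩
  · -- γ 0 = x
    have hu0 : ∀ n, u n 0 = x := by
      intro n
      have : k n 0 = 0 := by simp [hkdef]
      rw [hudef]
      simp only [this]
      exact dyadicPt_zero x y mid n
    have : Filter.Tendsto (fun n => u n 0) Filter.atTop (nhds x) := by
      simp only [hu0]
      exact tendsto_const_nhds
    exact tendsto_nhds_unique (hγ 0 h0mem) this
  · -- γ D = y
    have huD : ∀ n, u n D = y := by
      intro n
      have hkD : k n D = 2^n := by
        have : D * 2^n / D = ((2^n : ℕ) : ℝ) := by
          push_cast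
          field_simp
        simp only [hkdef, this, Nat.floor_natCast]
      rw [hudef]
      simp only [hkD]
      exact dyadicPt_top x y mid n
    have : Filter.Tendsto (fun n => u n D) Filter.atTop (nhds y) := by
      simp only [huD]
      exact tendsto_const_nhds
    exact tendsto_nhds_unique (hγ D hDmem) this
  · intro s hs t ht
    -- parameters converge
    have hpar : ∀ r ∈ Icc (0:ℝ) D,
        Filter.Tendsto (fun n => ((k n r : ℝ)) * (D / 2^n)) Filter.atTop (nhds r) := by
      intro r hr
      rw [tendsto_iff_dist_tendsto_zero]
      apply squeeze_zero (fun n => dist_nonneg) _ hgeo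
      intro n
      rw [Real.dist_eq]
      exact hk_approx n r hr
    have h1 : Filter.Tendsto (fun n => dist (u n s) (u n t)) Filter.atTop
        (nhds (dist (γ s) (γ t))) := (hγ s hs).dist (hγ t ht)
    have h2 : Filter.Tendsto (fun n => dist (u n s) (u n t)) Filter.atTop
        (nhds |s - t|) := by
      have heq : (fun n => dist (u n s) (u n t))
          = fun n => |((k n s : ℝ)) * (D / 2^n) - ((k n t : ℝ)) * (D / 2^n)| := by
        funext n
        exact hdist s hs t ht n n
      rw [heq]
      exact ((hpar s hs).sub (hpar t ht)).abs
    exact tendsto_nhds_unique h1 h2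

/-- a compact metric space which is a length space (the distance
between any two points is the infimum of lengths of continuous paths joining
them) is geodesic. -/
theorem stmt18 {X : Type*} [MetricSpace X] [CompactSpace X]
    (hlen : ∀ x y : X, ENNReal.ofReal (dist x y) =
      sInf {L : ENNReal | ∃ (a b : ℝ) (γ : ℝ → X), a ≤ b ∧
        ContinuousOn γ (Icc a b) ∧ γ a = x ∧ γ b = y ∧
        eVariationOn γ (Icc a b) = L}) :
    ∀ x y : X, ∃ γ : ℝ → X, γ 0 = x ∧ γ (dist x y) = y ∧
      ∀ s ∈ Icc (0:ℝ) (dist x y), ∀ t ∈ Icc (0:ℝ) (dist x y),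
        dist (γ s) (γ t) = |s - t| := by
  exact stmt18' (fun p q => existsMid hlen p q)
end
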